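/- Let γ > 0, b > 0, p > 0, p₂ ≥ p, q_max > b + p/γ. Define the optimal expected profit J*(p_r) = γb²/2 + p_r·p₂²/(2γ(1-p_r)) for 0 ≤ p_r ≤ p/(p₂+p), and J*(p_r) = p²/(2γ) + bp - p·q_max + γb²/2 - p²p_r/(2γ) + p₂²p_r/(2γ) - b·p·p_r - b·p₂·p_r + p·q_max·p_r + p₂·q_max·p_r for p/(p₂+p) ≤ p_r ≤ 1. Then J* is monotonically nondecreasing in p_r on [0, 1). -/

import Mathlib

open Set

/-- the optimal expected profit J*(p_r) is nondecreasing on [0,1). -/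
theorem stmt6 (γ b p p₂ qmax : ℝ) (hγ : 0 < γ) (hb : 0 < b) (hp : 0 < p)
    (hp₂ : p ≤ p₂) (hqmax : b + p / γ < qmax)
    (Jstar : ℝ → ℝ)
    (hJ : ∀ pr, Jstar pr =
      if pr ≤ p/(p₂+p) then γ*b^2/2 + pr*p₂^2/(2*γ*(1-pr))
      else p^2/(2*γ) + b*p - p*qmax + γ*b^2/2 - p^2*pr/(2*γ) + p₂^2*pr/(2*γ)
           - b*p*pr - b*p₂*pr + p*qmax*pr + p₂*qmax*pr) :
    MonotoneOn Jstar (Set.Ico 0 1) := by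
  have hs : 0 < p₂ + p := by linarith
  set t := p / (p₂ + p) with ht
  have ht0 : 0 ≤ t := by positivity
  have ht1 : t < 1 := (div_lt_one hs).mpr (by linarith)
  have hqb : b < qmax := by
    have : 0 < p / γ := by positivity
    linarith
  -- monotonicity of the first branch
  have hf : ∀ x y : ℝ, 0 ≤ x → x ≤ y → y < 1 →
      γ*b^2/2 + x*p₂^2/(2*γ*(1-x)) ≤ γ*b^2/2 + y*p₂^2/(2*γ*(1-y)) := by
    intro x y hx hxy hy1
    have hx1 : x < 1 := lt_of_le_of_lt hxy hy1
    have hdx : 0 < 2*γ*(1-x) := by nlinarith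
    have hdy : 0 < 2*γ*(1-y) := by nlinarith
    have : x*p₂^2/(2*γ*(1-x)) ≤ y*p₂^2/(2*γ*(1-y)) := by
      rw [div_le_div_iff₀ hdx hdy]
      nlinarith [mul_nonneg (mul_nonneg hγ.le (sq_nonneg p₂)) (sub_nonneg.mpr hxy)]
    linarith
  -- monotonicity of the second branch
  have hg : ∀ x y : ℝ, x ≤ y →
      p^2/(2*γ) + b*p - p*qmax + γ*b^2/2 - p^2*x/(2*γ) + p₂^2*x/(2*γ)
           - b*p*x - b*p₂*x + p*qmax*x + p₂*qmax*x ≤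
      p^2/(2*γ) + b*p - p*qmax + γ*b^2/2 - p^2*y/(2*γ) + p₂^2*y/(2*γ)
           - b*p*y - b*p₂*y + p*qmax*y + p₂*qmax*y := by
    intro x y hxy
    have h1 : p^2*x/(2*γ) - p₂^2*x/(2*γ) - (p^2*y/(2*γ) - p₂^2*y/(2*γ)) =
        (p^2 - p₂^2)*(x - y)/(2*γ) := by ring
    have h2 : (p^2 - p₂^2)*(x - y)/(2*γ) ≥ 0 := by
      apply div_nonneg _ (by linarith)
      nlinarith [mul_nonneg (by nlinarith : (0:ℝ) ≤ p₂^2 - p^2) (sub_nonneg.mpr hxy)]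
    have h3 : (0:ℝ) ≤ (b*p*x + b*p₂*x - p*qmax*x - p₂*qmax*x)
        - (b*p*y + b*p₂*y - p*qmax*y - p₂*qmax*y) := by
      nlinarith [mul_nonneg (sub_nonneg.mpr hxy) (mul_nonneg hs.le (sub_nonneg.mpr hqb.le))]
    linarith
  -- continuity at t
  have heq : γ*b^2/2 + t*p₂^2/(2*γ*(1-t)) =
      p^2/(2*γ) + b*p - p*qmax + γ*b^2/2 - p^2*t/(2*γ) + p₂^2*t/(2*γ)
           - b*p*t - b*p₂*t + p*qmax*t + p₂*qmax*t := by
    have h1t : 1 - t = p₂ / (p₂ + p) := by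
      rw [ht]; field_simp; ring
    rw [ht, h1t]
    have hp₂0 : 0 < p₂ := lt_of_lt_of_le hp hp₂
    field_simp
    ring
  intro x hx y hy hxy
  rw [hJ x, hJ y]
  split_ifs with h1 h2 h2
  · exact hf x y hx.1 hxy hy.2
  · calc γ*b^2/2 + x*p₂^2/(2*γ*(1-x)) ≤ γ*b^2/2 + t*p₂^2/(2*γ*(1-t)) :=
        hf x t hx.1 h1 ht1
      _ = _ := heq
      _ ≤ _ := hg t y (le_of_not_ge h2)
  · exact absurd (hxy.trans h2) h1
  · exact hg x y hxy
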